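/- Define word sequences Sₖ and Iₖ over {0,1} by S₀ = ε (empty word), I₀ = "0", and Sₖ₊₁ = Sₖ Iₖ Sₖ Iₖ Sₖ · "10" · Sₖ Iₖ Sₖ · "01" · Sₖ Iₖ Sₖ Iₖ Sₖ, Iₖ₊₁ = "01" · Sₖ Iₖ Sₖ Iₖ Sₖ · "10". Then for all k ≥ 0, the word identity "01" · Sₖ · Iₖ = Iₖ · Sₖ · "10" holds. -/

import Mathlib

/-- The pair (Sₖ, Iₖ) of articulated Spectre worm words, with E = "10" and O = "01". -/
def SI : ℕ → List ℕ × List ℕ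
  | 0 => ([], [0])
  | (k + 1) =>
      let s := (SI k).1
      let i := (SI k).2
      (s ++ i ++ s ++ i ++ s ++ [1, 0] ++ s ++ i ++ s ++ [0, 1] ++ s ++ i ++ s ++ i ++ s,
       [0, 1] ++ (s ++ i ++ s ++ i ++ s) ++ [1, 0])

theorem OSI_eq_ISE (k : ℕ) :
    [0, 1] ++ (SI k).1 ++ (SI k).2 = (SI k).2 ++ (SI k).1 ++ [1, 0] := by
  induction k with
  | zero => rfl
  | succ k ih =>
    set s := (SI k).1
    set i := (SI k).2
    have h' : ∀ t : List ℕ, [0,1] ++ (s ++ (i ++ t)) = i ++ (s ++ ([1,0] ++ t)) := by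
      intro t
      have := congrArg (· ++ t) ih
      simpa [List.append_assoc] using this
    simp only [SI, List.append_assoc]
    simp +zetaDelta only [h']
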